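/- Let a ∈ ℂ satisfy a³ − 3a² + 2a − 1 = 0. Then a ≠ 0 and a ≠ 2, and the Möbius change of variable τ(z) = 1/(z − a) + 1/a conjugates f_a to the quadratic polynomial P(w) = 1/a − a³(a − 2)·w²: for every z ∈ ℂ with z ≠ 0, z ≠ a and f_a(z) ≠ a, one has 1/(f_a(z) − a) + 1/a = 1/a − a³(a − 2)·(1/(z − a) + 1/a)². -/

import Mathlib

/-- The quadratic rational map `f_a(z) = (z-1)(z - a/(2-a))/z²` in the slice `Per₃(0)`. -/
noncomputable def fRat (a : ℂ) (z : ℂ) : ℂ := (z - 1) * (z - a / (2 - a)) / z ^ 2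

theorem stmt_12 (a : ℂ) (ha : a ^ 3 - 3 * a ^ 2 + 2 * a - 1 = 0) :
    a ≠ 0 ∧ a ≠ 2 ∧
      ∀ z : ℂ, z ≠ 0 → z ≠ a → fRat a z ≠ a →
        1 / (fRat a z - a) + 1 / a =
          1 / a - a ^ 3 * (a - 2) * (1 / (z - a) + 1 / a) ^ 2 := by
  have ha0 : a ≠ 0 := by rintro rfl; norm_num at ha
  have ha2 : a ≠ 2 := by rintro rfl; norm_num at ha
  refine ⟨ha0, ha2, fun z hz hza hf => ?_⟩
  have h2 : (2 : ℂ) - a ≠ 0 := fun h => ha2 (by linear_combination -h)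
  have hza' : z - a ≠ 0 := sub_ne_zero.mpr hza
  have hD : (z - 1) * (z * (2 - a) - a) - (2 - a) * z ^ 2 * a ≠ 0 := by
    intro h
    apply hf
    rw [fRat, div_eq_iff (pow_ne_zero 2 hz)]
    field_simp
    linear_combination h
  rw [fRat]
  have hD' : (z - 1) * (z * (2 - a) - a) - z ^ 2 * a * (2 - a) ≠ 0 := by
    intro h; apply hD; linear_combination h
  field_simp [hD, hD']
  linear_combination (a^2*z^4 - 2*a*z^4) * ha
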